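/- Let Y be the additive group ℚ₂ of dyadic rational numbers {m/2^n : m ∈ ℤ, n ≥ 0} with the discrete topology, and let g : ℚ₂ → ℝ be a real-valued positive definite function with g(0) = 1, g(1) ≠ 0, satisfying 0 ≤ g(2r) ≤ g(r)² for all r ∈ ℚ₂ with |r| ≤ 1/2. Then g is uniformly continuous on ℚ₂ with respect to the metric induced by the usual absolute value on ℝ. -/

import Mathlib

open scoped ComplexOrder

/-- The set of dyadic rational numbers inside `ℝ`. -/
def dyadicSet : Set ℝ := {x : ℝ | ∃ (m : ℤ) (n : ℕ), x = (m : ℝ) / 2 ^ n}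

namespace S19

lemma mem_div (m : ℤ) (n : ℕ) : (m : ℝ) / 2 ^ n ∈ dyadicSet := ⟨m, n, rfl⟩
lemma mem_zero : (0:ℝ) ∈ dyadicSet := ⟨0, 0, by norm_num⟩
lemma mem_pow (n : ℕ) : ((2:ℝ)^n)⁻¹ ∈ dyadicSet := ⟨1, n, by simp⟩

lemma mem_sub {x y : ℝ} (hx : x ∈ dyadicSet) (hy : y ∈ dyadicSet) : x - y ∈ dyadicSet := by
  obtain ⟨m, n, rfl⟩ := hx
  obtain ⟨m', n', rfl⟩ := hy
  refine ⟨m * 2 ^ n' - m' * 2 ^ n, n + n', ?_⟩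
  push_cast
  field_simp
  ring

noncomputable def q : ℝ := (Real.sqrt 2)⁻¹

lemma q_pos : 0 < q := by unfold q; positivity

lemma q_sq : q ^ 2 = 2⁻¹ := by
  unfold q
  rw [inv_pow, Real.sq_sqrt (by norm_num)]

lemma q_lt_one : q < 1 := by nlinarith [q_sq, q_pos]

lemma half_le_q : (2:ℝ)⁻¹ ≤ q := by nlinarith [q_sq, q_pos, q_lt_one]

lemma q_pow_eq (n : ℕ) : Real.sqrt (((2:ℝ)^n)⁻¹) = q ^ n := by
  have h : ((2:ℝ)^n)⁻¹ = (q ^ n) ^ 2 := by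
    rw [← pow_mul, mul_comm, pow_mul, q_sq, inv_pow]
  rw [h, Real.sqrt_sq (pow_nonneg q_pos.le n)]

lemma pow_inv_le_q_pow (n : ℕ) : ((2:ℝ)^n)⁻¹ ≤ q ^ n := by
  rw [← inv_pow]
  exact pow_le_pow_left₀ (by norm_num) half_le_q n

lemma half_pow_le (n : ℕ) : |((2:ℝ)^(n+1))⁻¹| ≤ 1/2 := by
  rw [abs_of_nonneg (by positivity), one_div]
  apply inv_anti₀ (by norm_num)
  calc (2:ℝ) = 2 ^ 1 := by norm_num
  _ ≤ 2 ^ (n+1) := by apply pow_le_pow_right₀ (by norm_num) (by omega)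

lemma two_mul_pow (n : ℕ) : 2 * ((2:ℝ)^(n+1))⁻¹ = ((2:ℝ)^n)⁻¹ := by
  rw [pow_succ]
  field_simp

section PD

variable {g : ℝ → ℝ}
  (hpd : ∀ (n : ℕ) (r : Fin n → ℝ), (∀ i, r i ∈ dyadicSet) → ∀ c : Fin n → ℂ,
      0 ≤ ∑ i, ∑ j, c i * (starRingEnd ℂ) (c j) * (g (r i - r j) : ℂ))

include hpd

lemma realpd (n : ℕ) (r : Fin n → ℝ) (hr : ∀ i, r i ∈ dyadicSet) (c : Fin n → ℝ) :
    0 ≤ ∑ i, ∑ j, c i * c j * g (r i - r j) := by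
  have h := hpd n r hr (fun i => (c i : ℂ))
  have h2 : ∑ i, ∑ j, (c i : ℂ) * (starRingEnd ℂ) ((c j : ℂ)) * (g (r i - r j) : ℂ)
      = ((∑ i, ∑ j, c i * c j * g (r i - r j) : ℝ) : ℂ) := by
    push_cast [Complex.conj_ofReal]
    rfl
  rw [h2] at h
  exact_mod_cast h

lemma geven {t : ℝ} (ht : t ∈ dyadicSet) : g (-t) = g t := by
  have h := hpd 2 ![0, t] (by
    intro i; fin_cases i
    · exact mem_zero
    · exact ht) ![1, Complex.I]
  have him := (Complex.le_def.mp h).2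
  simp [Fin.sum_univ_two, Complex.ext_iff, Complex.add_im, Complex.mul_im] at him
  linarith

lemma gle_one (h0 : g 0 = 1) {t : ℝ} (ht : t ∈ dyadicSet) : |g t| ≤ 1 := by
  have hr : ∀ i, (![0, t] : Fin 2 → ℝ) i ∈ dyadicSet := by
    intro i; fin_cases i
    · exact mem_zero
    · exact ht
  have h1 := realpd hpd 2 ![0, t] hr ![1, 1]
  have h2 := realpd hpd 2 ![0, t] hr ![1, -1]
  have he := geven hpd ht
  simp [Fin.sum_univ_two, h0] at h1 h2
  rw [abs_le]
  constructor <;> nlinarith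

lemma gdiff_sq (h0 : g 0 = 1) {x y : ℝ} (hx : x ∈ dyadicSet) (hy : y ∈ dyadicSet) :
    (g x - g y) ^ 2 ≤ 2 * (1 - g (x - y)) := by
  have hr : ∀ i, (![0, x, y] : Fin 3 → ℝ) i ∈ dyadicSet := by
    intro i; fin_cases i
    · exact mem_zero
    · exact hx
    · exact hy
  have h := realpd hpd 3 ![0, x, y] hr ![g y - g x, 1, -1]
  have hex := geven hpd hx
  have hey := geven hpd hy
  have hexy : g (y - x) = g (x - y) := by
    have := geven hpd (mem_sub hx hy)
    rw [neg_sub] at this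
    exact this
  simp [Fin.sum_univ_three, h0] at h
  rw [hex, hey, hexy] at h
  nlinarith [sq_nonneg (g x - g y)]

end PD

section INEQ

variable {g : ℝ → ℝ}
  (hineq : ∀ r ∈ dyadicSet, |r| ≤ 1 / 2 → 0 ≤ g (2 * r) ∧ g (2 * r) ≤ g r ^ 2)

include hineq

lemma gpow_nonneg (n : ℕ) : 0 ≤ g (((2:ℝ) ^ n)⁻¹) := by
  have h := (hineq ((2 ^ (n+1))⁻¹) (mem_pow (n+1)) (half_pow_le n)).1
  rwa [two_mul_pow n] at h

lemma gpow_sq (n : ℕ) : g (((2:ℝ) ^ n)⁻¹) ≤ g (((2:ℝ) ^ (n+1))⁻¹) ^ 2 := by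
  have h := (hineq ((2 ^ (n+1))⁻¹) (mem_pow (n+1)) (half_pow_le n)).2
  rwa [two_mul_pow n] at h

lemma gpow_lower (h1 : 0 < g 1) (n : ℕ) :
    g 1 ^ (((2:ℝ) ^ n)⁻¹ : ℝ) ≤ g (((2:ℝ) ^ n)⁻¹) := by
  induction n with
  | zero => simp
  | succ n ih =>
    have key : (g 1 ^ (((2:ℝ) ^ (n+1))⁻¹ : ℝ)) ^ 2 = g 1 ^ (((2:ℝ) ^ n)⁻¹ : ℝ) := by
      rw [← Real.rpow_natCast (g 1 ^ (((2:ℝ) ^ (n+1))⁻¹ : ℝ)) 2, ← Real.rpow_mul h1.le]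
      congr 1
      rw [pow_succ]
      push_cast
      field_simp
    have h2 : (g 1 ^ (((2:ℝ) ^ (n+1))⁻¹ : ℝ)) ^ 2 ≤ g (((2:ℝ) ^ (n+1))⁻¹) ^ 2 := by
      rw [key]
      exact ih.trans (gpow_sq hineq n)
    have hb : (0:ℝ) ≤ g 1 ^ (((2:ℝ) ^ (n+1))⁻¹ : ℝ) := (Real.rpow_pos_of_pos h1 _).le
    have := Real.sqrt_le_sqrt h2
    rwa [Real.sqrt_sq hb, Real.sqrt_sq (gpow_nonneg hineq (n+1))] at this

lemma hbound (h1 : 0 < g 1) (n : ℕ) :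
    1 - g (((2:ℝ) ^ n)⁻¹) ≤ (-Real.log (g 1)) * ((2:ℝ)^n)⁻¹ := by
  have hx := gpow_lower hineq h1 n
  rw [Real.rpow_def_of_pos h1] at hx
  have he := Real.add_one_le_exp (Real.log (g 1) * ((2:ℝ)^n)⁻¹)
  linarith

end INEQ

end S19

namespace S19

section KEY

variable {g : ℝ → ℝ}
  (hpd : ∀ (n : ℕ) (r : Fin n → ℝ), (∀ i, r i ∈ dyadicSet) → ∀ c : Fin n → ℂ,
      0 ≤ ∑ i, ∑ j, c i * (starRingEnd ℂ) (c j) * (g (r i - r j) : ℂ))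
  (hineq : ∀ r ∈ dyadicSet, |r| ≤ 1 / 2 → 0 ≤ g (2 * r) ∧ g (2 * r) ≤ g r ^ 2)
  (h0 : g 0 = 1) (h1 : 0 < g 1)

include hpd hineq h0 h1

lemma key (k : ℕ) : ∀ (n : ℕ) (m : ℤ),
    |(m:ℝ)/2^(n+k)| ≤ ((2:ℝ)^n)⁻¹ →
    1 - g ((m:ℝ)/2^(n+k)) ≤
      (Real.sqrt (2 * (-Real.log (g 1))) / (1 - q) + (-Real.log (g 1))) * q ^ n := by
  set L : ℝ := -Real.log (g 1) with hLdef
  set B : ℝ := Real.sqrt (2 * L) / (1 - q) + L with hBdef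
  have hL : 0 ≤ L := by
    rw [hLdef, neg_nonneg]
    apply Real.log_nonpos h1.le
    have hmem : (1:ℝ) ∈ dyadicSet := ⟨1, 0, by norm_num⟩
    have := gle_one hpd h0 hmem
    rw [abs_le] at this
    exact this.2
  have hq1 : 0 < 1 - q := by linarith [q_lt_one]
  have hB : 0 ≤ B := by positivity
  have hsq : 0 ≤ Real.sqrt (2*L) / (1 - q) := div_nonneg (Real.sqrt_nonneg _) hq1.le
  have hLB : L ≤ B := by rw [hBdef]; linarith
  have hBq : Real.sqrt (2*L) ≤ B * (1 - q) := by
    have e : B * (1-q) = Real.sqrt (2*L) + L*(1-q) := by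
      rw [hBdef]; field_simp
    have h2 : 0 ≤ L * (1 - q) := mul_nonneg hL hq1.le
    rw [e]; linarith
  have hrec : ∀ n : ℕ, B * q^(n+1) + Real.sqrt (2*L) * q^n ≤ B * q^n := by
    intro n
    have hqn : (0:ℝ) ≤ q ^ n := pow_nonneg q_pos.le n
    calc B * q^(n+1) + Real.sqrt (2*L) * q^n = (B * q + Real.sqrt (2*L)) * q^n := by ring
    _ ≤ B * q^n := by
        apply mul_le_mul_of_nonneg_right _ hqn
        nlinarith [hBq]
  induction k with
  | zero =>
    intro n m hm
    rw [Nat.add_zero] at *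
    have hm1 : |m| ≤ 1 := by
      by_contra hc
      push_neg at hc
      have h2 : (2:ℝ) ≤ |(m:ℝ)| := by
        have : (2:ℤ) ≤ |m| := hc
        exact_mod_cast (by exact_mod_cast this : (2:ℝ) ≤ (|m| : ℤ))
      rw [abs_div, abs_of_nonneg (by positivity : (0:ℝ) ≤ (2:ℝ)^n)] at hm
      rw [div_le_iff₀ (by positivity)] at hm
      rw [inv_mul_cancel₀ (by positivity : ((2:ℝ)^n) ≠ 0)] at hm
      linarith
    obtain ⟨hm1a, hm1b⟩ := abs_le.mp hm1
    interval_cases m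
    · -- m = -1
      have he : ((-1:ℤ):ℝ)/2^n = -(((2:ℝ)^n)⁻¹) := by push_cast; ring
      rw [he, geven hpd (mem_pow n)]
      calc 1 - g (((2:ℝ)^n)⁻¹) ≤ L * ((2:ℝ)^n)⁻¹ := hbound hineq h1 n
      _ ≤ L * q ^ n := by
          apply mul_le_mul_of_nonneg_left (pow_inv_le_q_pow n) hL
      _ ≤ B * q ^ n := by
          apply mul_le_mul_of_nonneg_right hLB (pow_nonneg q_pos.le n)
    · -- m = 0
      have he : ((0:ℤ):ℝ)/2^n = (0:ℝ) := by push_cast; ring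
      rw [he, h0]
      have : 0 ≤ B * q ^ n := mul_nonneg hB (pow_nonneg q_pos.le n)
      linarith
    · -- m = 1
      have he : ((1:ℤ):ℝ)/2^n = ((2:ℝ)^n)⁻¹ := by push_cast; ring
      rw [he]
      calc 1 - g (((2:ℝ)^n)⁻¹) ≤ L * ((2:ℝ)^n)⁻¹ := hbound hineq h1 n
      _ ≤ L * q ^ n := mul_le_mul_of_nonneg_left (pow_inv_le_q_pow n) hL
      _ ≤ B * q ^ n := mul_le_mul_of_nonneg_right hLB (pow_nonneg q_pos.le n)
  | succ k ih =>
    intro n m hm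
    set r : ℝ := (m:ℝ)/2^(n+(k+1)) with hrdef
    have hqn1 : B * q ^ (n+1) ≤ B * q ^ n := by
      apply mul_le_mul_of_nonneg_left _ hB
      apply pow_le_pow_of_le_one q_pos.le q_lt_one.le (by omega)
    by_cases hcase : |r| ≤ ((2:ℝ)^(n+1))⁻¹
    · -- small case: use ih with n+1
      have := ih (n+1) m (by rw [show (n+1)+k = n+(k+1) by omega]; exact hcase)
      rw [show (n+1)+k = n+(k+1) by omega] at this
      exact this.trans hqn1
    · push_neg at hcase
      -- |r| > 2^{-(n+1)}, and |r| ≤ 2^{-n}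
      have hdiffbd : ∀ s : ℝ, s ∈ dyadicSet → r - s = ((2:ℝ)^n)⁻¹ ∨ r - s = -(((2:ℝ)^n)⁻¹) →
          g s - g r ≤ Real.sqrt (2*L) * q ^ n := by
        intro s hs hrs
        have hgd : (g r - g s)^2 ≤ 2 * (1 - g (((2:ℝ)^n)⁻¹)) := by
          have h := gdiff_sq hpd h0 (mem_div m (n+(k+1))) hs
          rcases hrs with h' | h'
          · rwa [h'] at h
          · rw [h'] at h
            rwa [geven hpd (mem_pow n)] at h
        have hb : 2 * (1 - g (((2:ℝ)^n)⁻¹)) ≤ 2 * L * ((2:ℝ)^n)⁻¹ := by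
          have := hbound hineq h1 n
          nlinarith
        have habs : |g r - g s| ≤ Real.sqrt (2 * L * ((2:ℝ)^n)⁻¹) :=
          Real.abs_le_sqrt (hgd.trans hb)
        have heq : Real.sqrt (2 * L * ((2:ℝ)^n)⁻¹) = Real.sqrt (2*L) * q ^ n := by
          rw [Real.sqrt_mul (by positivity), q_pow_eq]
        rw [heq] at habs
        have := neg_abs_le (g r - g s)
        linarith [abs_nonneg (g r - g s), (abs_le.mp habs).1]
      rcases le_or_gt 0 r with hr0 | hr0
      · -- r > 0 case: s = r - 2^{-n}
        have hrpos : ((2:ℝ)^(n+1))⁻¹ < r := by rwa [abs_of_nonneg hr0] at hcase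
        set m' : ℤ := m - 2^(k+1) with hm'def
        have hs_eq : ((m':ℤ):ℝ)/2^(n+(k+1)) = r - ((2:ℝ)^n)⁻¹ := by
          rw [hrdef, hm'def]
          push_cast
          field_simp
          ring
        have hsbd : |((m':ℤ):ℝ)/2^((n+1)+k)| ≤ ((2:ℝ)^(n+1))⁻¹ := by
          rw [show (n+1)+k = n+(k+1) by omega, hs_eq, abs_le]
          have h2n : ((2:ℝ)^n)⁻¹ = 2 * ((2:ℝ)^(n+1))⁻¹ := (two_mul_pow n).symm
          have hrle : r ≤ ((2:ℝ)^n)⁻¹ := (le_abs_self r).trans hm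
          have hp1 : (0:ℝ) < ((2:ℝ)^(n+1))⁻¹ := by positivity
          constructor
          · linarith
          · linarith
        have hih := ih (n+1) m' hsbd
        rw [show (n+1)+k = n+(k+1) by omega, hs_eq] at hih
        have hd := hdiffbd (r - ((2:ℝ)^n)⁻¹) (by rw [← hs_eq]; exact mem_div m' (n+(k+1)))
          (Or.inl (by ring))
        calc 1 - g r = (1 - g (r - ((2:ℝ)^n)⁻¹)) + (g (r - ((2:ℝ)^n)⁻¹) - g r) := by ring
        _ ≤ B * q^(n+1) + Real.sqrt (2*L) * q^n := add_le_add hih hd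
        _ ≤ B * q ^ n := hrec n
      · -- r < 0 case: s = r + 2^{-n}
        have hrneg : ((2:ℝ)^(n+1))⁻¹ < -r := by rwa [abs_of_neg hr0] at hcase
        set m' : ℤ := m + 2^(k+1) with hm'def
        have hs_eq : ((m':ℤ):ℝ)/2^(n+(k+1)) = r + ((2:ℝ)^n)⁻¹ := by
          rw [hrdef, hm'def]
          push_cast
          field_simp
          ring
        have hsbd : |((m':ℤ):ℝ)/2^((n+1)+k)| ≤ ((2:ℝ)^(n+1))⁻¹ := by
          rw [show (n+1)+k = n+(k+1) by omega, hs_eq, abs_le]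
          have h2n : ((2:ℝ)^n)⁻¹ = 2 * ((2:ℝ)^(n+1))⁻¹ := (two_mul_pow n).symm
          have hrle : -r ≤ ((2:ℝ)^n)⁻¹ := (neg_le_abs r).trans hm
          have hp1 : (0:ℝ) < ((2:ℝ)^(n+1))⁻¹ := by positivity
          constructor
          · linarith
          · linarith
        have hih := ih (n+1) m' hsbd
        rw [show (n+1)+k = n+(k+1) by omega, hs_eq] at hih
        have hd := hdiffbd (r + ((2:ℝ)^n)⁻¹) (by rw [← hs_eq]; exact mem_div m' (n+(k+1)))
          (Or.inr (by ring))
        calc 1 - g r = (1 - g (r + ((2:ℝ)^n)⁻¹)) + (g (r + ((2:ℝ)^n)⁻¹) - g r) := by ring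
        _ ≤ B * q^(n+1) + Real.sqrt (2*L) * q^n := add_le_add hih hd
        _ ≤ B * q ^ n := hrec n

end KEY

end S19

theorem stmt19 (g : ℝ → ℝ)
    (hpd : ∀ (n : ℕ) (r : Fin n → ℝ), (∀ i, r i ∈ dyadicSet) → ∀ c : Fin n → ℂ,
      0 ≤ ∑ i, ∑ j, c i * (starRingEnd ℂ) (c j) * (g (r i - r j) : ℂ))
    (h0 : g 0 = 1)
    (h1 : g 1 ≠ 0)
    (hineq : ∀ r ∈ dyadicSet, |r| ≤ 1 / 2 → 0 ≤ g (2 * r) ∧ g (2 * r) ≤ g r ^ 2) :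
    UniformContinuousOn g dyadicSet := by
  have h1pos : 0 < g 1 := by
    have hh := (hineq (1/2) ⟨1, 1, by norm_num⟩ (by rw [abs_of_nonneg (by norm_num)])).1
    norm_num at hh
    exact hh.lt_of_ne (Ne.symm h1)
  set L : ℝ := -Real.log (g 1) with hLdef
  set B : ℝ := Real.sqrt (2 * L) / (1 - S19.q) + L with hBdef
  have hq1 : 0 < 1 - S19.q := by linarith [S19.q_lt_one]
  have hB : 0 ≤ B := by
    have h2 : 0 ≤ Real.sqrt (2*L) / (1 - S19.q) := div_nonneg (Real.sqrt_nonneg _) hq1.le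
    have hL : 0 ≤ L := by
      rw [hLdef, neg_nonneg]
      apply Real.log_nonpos h1pos.le
      have hmem : (1:ℝ) ∈ dyadicSet := ⟨1, 0, by norm_num⟩
      exact (abs_le.mp (S19.gle_one hpd h0 hmem)).2
    rw [hBdef]
    linarith
  clear_value L B
  rw [Metric.uniformContinuousOn_iff]
  intro ε hε
  have hB1 : (0:ℝ) < B + 1 := by linarith
  obtain ⟨n, hn⟩ : ∃ n : ℕ, S19.q ^ n < ε^2 / (2 * (B+1)) :=
    exists_pow_lt_of_lt_one (by positivity) S19.q_lt_one
  refine ⟨((2:ℝ)^n)⁻¹, by positivity, ?_⟩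
  intro x hx y hy hxy
  obtain ⟨a, p, rfl⟩ := hx
  obtain ⟨b, s, rfl⟩ := hy
  set X : ℝ := (a:ℝ)/2^p with hX
  set Y : ℝ := (b:ℝ)/2^s with hY
  have hXd : X ∈ dyadicSet := ⟨a, p, rfl⟩
  have hYd : Y ∈ dyadicSet := ⟨b, s, rfl⟩
  set m : ℤ := (a * 2^s - b * 2^p) * 2^n with hm
  have heq : ((m:ℤ):ℝ)/2^(n+(p+s)) = X - Y := by
    rw [hm, hX, hY]
    push_cast
    field_simp
    ring
  have habs : |((m:ℤ):ℝ)/2^(n+(p+s))| ≤ ((2:ℝ)^n)⁻¹ := by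
    rw [heq]
    rw [Real.dist_eq] at hxy
    exact le_of_lt hxy
  have hk := S19.key hpd hineq h0 h1pos (p+s) n m habs
  rw [heq, ← hLdef, ← hBdef] at hk
  have hd := S19.gdiff_sq hpd h0 hXd hYd
  have hqn : (0:ℝ) ≤ S19.q ^ n := pow_nonneg S19.q_pos.le n
  have hfin : (g X - g Y)^2 < ε^2 := by
    have c1 : B * S19.q ^ n ≤ (B+1) * S19.q^n := by nlinarith
    have c2 : (B+1) * S19.q^n < (B+1) * (ε^2 / (2*(B+1))) :=
      mul_lt_mul_of_pos_left hn hB1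
    have c3 : (B+1) * (ε^2 / (2*(B+1))) = ε^2/2 := by
      field_simp
    nlinarith
  rw [Real.dist_eq]
  have := Real.sqrt_lt_sqrt (sq_nonneg (g X - g Y)) hfin
  rwa [Real.sqrt_sq_eq_abs, Real.sqrt_sq hε.le] at this
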